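/- For pairwise distinct reals λ₁,…,λ_{n+1} and any real t, ∑_{σ∈S_{n+1}} ∏_{k=1}^{n} (λ_{σ(1)} − t·λ_{σ(n+1)})/(λ_{σ(k)} − λ_{σ(k+1)}) = ∑_{k=0}^{n} C(n,k)² · t^k (the Narayana-type generating polynomial ∑ C(n,k)² t^k). -/

import Mathlib

open Finset

noncomputable def den : List ℝ → ℝ
  | [] => 1
  | [_] => 1
  | a :: b :: L => (a - b) * den (b :: L)

@[simp] lemma den_nil : den [] = 1 := rfl
@[simp] lemma den_single (a : ℝ) : den [a] = 1 := rfl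
@[simp] lemma den_cons2 (a b : ℝ) (L : List ℝ) :
    den (a :: b :: L) = (a - b) * den (b :: L) := rfl

lemma den_cons (a : ℝ) {L : List ℝ} (h : L ≠ []) :
    den (a :: L) = (a - L.headI) * den L := by
  cases L with
  | nil => simp at h
  | cons b M => rfl

lemma den_ne_zero : ∀ {L : List ℝ}, L.Nodup → den L ≠ 0
  | [], _ => one_ne_zero
  | [_], _ => one_ne_zero
  | a :: b :: L, h => by
      have h1 : a ≠ b := by
        simp only [List.nodup_cons, List.mem_cons] at h
        tauto
      have h2 : (b :: L).Nodup := h.of_cons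
      exact mul_ne_zero (sub_ne_zero.2 h1) (den_ne_zero h2)

lemma getLastD_congr {L : List ℝ} (h : L ≠ []) (d d' : ℝ) :
    L.getLastD d = L.getLastD d' := by
  rw [List.getLastD_eq_getLast?, List.getLastD_eq_getLast?, List.getLast?_eq_getLast h]
  rfl

lemma getLastD_mem {L : List ℝ} (h : L ≠ []) (d : ℝ) : L.getLastD d ∈ L := by
  cases L with
  | nil => simp at h
  | cons a M =>
      rw [List.getLastD_cons]
      exact List.getLastD_mem_cons

/-- The summand: g(head) * h(last) / chain denominator. -/
noncomputable def W (g h : ℝ → ℝ) (L : List ℝ) : ℝ :=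
  g L.headI * h (L.getLastD 0) / den L

lemma W_cons (g h : ℝ → ℝ) (y : ℝ) {L : List ℝ} (hL : L ≠ []) :
    W g h (y :: L) = W (fun w => g y / (y - w)) h L := by
  unfold W
  rw [den_cons y hL]
  have h1 : (y :: L).getLastD 0 = L.getLastD 0 := by
    rw [List.getLastD_cons]
    exact getLastD_congr hL y 0
  rw [h1]
  show g y * _ / _ = _
  simp only [div_eq_mul_inv, mul_inv]
  ring

lemma pAux_ne_nil : ∀ (N : List ℝ) (x : ℝ) (L : List ℝ),
    L ∈ N.permutations'Aux x → L ≠ []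
  | [], x, L, hL => by
      simp only [List.permutations'Aux, List.mem_singleton] at hL
      subst hL; simp
  | y :: ys, x, L, hL => by
      simp only [List.permutations'Aux, List.mem_cons, List.mem_map] at hL
      rcases hL with rfl | ⟨M, _, rfl⟩ <;> simp

lemma ins (h : ℝ → ℝ) :
    ∀ (M : List ℝ) (g : ℝ → ℝ) (x : ℝ), M ≠ [] → (x :: M).Nodup →
    ((M.permutations'Aux x).map (W g h)).sum
      = ((g x - g M.headI) * h (M.getLastD 0) / (x - M.headI)
         + g M.headI * (h x - h (M.getLastD 0)) / (M.getLastD 0 - x)) / den M := by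
  intro M
  induction M with
  | nil => intro g x h1 _; exact absurd rfl h1
  | cons y N ih =>
    intro g x _ hnd
    cases N with
    | nil =>
      have hxy : x ≠ y := by
        simp only [List.nodup_cons, List.mem_cons] at hnd; tauto
      simp only [List.permutations'Aux, List.map_nil, List.map_cons, List.map_map,
        List.sum_cons, List.sum_nil]
      unfold W
      simp only [List.headI, List.getLastD_cons, List.getLastD, den_single, den_cons2,
        Function.comp, List.getLast_cons_cons, List.getLast_singleton]
      have h1 : x - y ≠ 0 := sub_ne_zero.2 hxy
      have h2 : y - x ≠ 0 := sub_ne_zero.2 hxy.symm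
      field_simp
      ring
    | cons z ys =>
      have hx4 : x ∉ (y :: z :: ys) := (List.nodup_cons.1 hnd).1
      have hnd3 : (y :: z :: ys).Nodup := (List.nodup_cons.1 hnd).2
      have hxM : x ∉ (z :: ys) := fun hh => hx4 (List.mem_cons_of_mem _ hh)
      have hxy : x ≠ y := fun hh => hx4 (by simp [hh])
      have hyz : y ≠ z := by
        have := (List.nodup_cons.1 hnd3).1
        exact fun hh => this (by simp [hh])
      have hxz : x ≠ z := fun hh => hxM (by simp [hh])
      have hndzys : (z :: ys).Nodup := (List.nodup_cons.1 hnd3).2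
      have hnd' : (x :: z :: ys).Nodup := List.nodup_cons.2 ⟨hxM, hndzys⟩
      -- abbreviations
      set e := (z :: ys).getLastD 0 with he_def
      have heMem : e ∈ (z :: ys) := getLastD_mem (by simp) 0
      have hxe : x ≠ e := fun hh => hxM (hh ▸ heMem)
      have hD : den (z :: ys) ≠ 0 := den_ne_zero hndzys
      -- unfold one step of permutations'Aux
      rw [show List.permutations'Aux x (y :: z :: ys)
            = (x :: y :: z :: ys) :: (List.permutations'Aux x (z :: ys)).map (y :: ·) from rfl,
          List.map_cons, List.sum_cons, List.map_map]
      -- rewrite the mapped function on members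
      have hmap : ∀ L ∈ (z :: ys).permutations'Aux x,
          (W g h ∘ List.cons y) L = W (fun w => g y / (y - w)) h L := by
        intro L hL
        exact W_cons g h y (pAux_ne_nil _ _ _ hL)
      rw [List.map_congr_left hmap, ih (fun w => g y / (y - w)) x (by simp) hnd']
      -- now pure algebra
      have hgl : (y :: z :: ys).getLastD 0 = e := by
        rw [List.getLastD_cons]
        exact getLastD_congr (by simp) y 0
      have hgl2 : (x :: y :: z :: ys).getLastD 0 = e := by
        rw [List.getLastD_cons, getLastD_congr (L := y :: z :: ys) (by simp) x 0, hgl]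
      unfold W
      rw [hgl2]
      show g x * h e / den (x :: y :: z :: ys) + _ = _
      rw [show den (x :: y :: z :: ys) = (x - y) * ((y - z) * den (z :: ys)) from rfl]
      rw [show (y :: z :: ys).headI = y from rfl, hgl,
        show den (y :: z :: ys) = (y - z) * den (z :: ys) from rfl,
        show (z :: ys).headI = z from rfl]
      have h1 : x - y ≠ 0 := sub_ne_zero.2 hxy
      have h2 : y - z ≠ 0 := sub_ne_zero.2 hyz
      have h3 : x - z ≠ 0 := sub_ne_zero.2 hxz
      have h4 : e - x ≠ 0 := sub_ne_zero.2 (Ne.symm hxe)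
      have h5 : y - x ≠ 0 := sub_ne_zero.2 hxy.symm
      field_simp
      ring

lemma pAux_sum_eq (a b : ℕ) (x : ℝ) (M' : List ℝ) (hne : M' ≠ []) (hnd : (x :: M').Nodup) :
    ((M'.permutations'Aux x).map (W (fun y => y ^ a) (fun y => y ^ b))).sum
      = (∑ i ∈ Finset.range a, x ^ i * W (fun y => y ^ (a - 1 - i)) (fun y => y ^ b) M')
        - ∑ i ∈ Finset.range b, x ^ i * W (fun y => y ^ a) (fun y => y ^ (b - 1 - i)) M' := by
  rw [ins _ _ _ _ hne hnd]
  set d := M'.headI with hd_def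
  set e := M'.getLastD 0 with he_def
  have hxM : x ∉ M' := (List.nodup_cons.1 hnd).1
  have hdM : d ∈ M' := by
    have := List.head!_mem_self (l := M') hne
    cases M' with
    | nil => exact absurd rfl hne
    | cons u us => exact List.mem_cons_self
  have heM : e ∈ M' := getLastD_mem hne 0
  have hxd : x - d ≠ 0 := sub_ne_zero.2 fun hh => hxM (hh ▸ hdM)
  have hxe : x - e ≠ 0 := sub_ne_zero.2 fun hh => hxM (hh ▸ heM)
  have k1 : (x ^ a - d ^ a) * e ^ b / (x - d)
      = ∑ i ∈ Finset.range a, x ^ i * (d ^ (a - 1 - i) * e ^ b) := by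
    rw [← geom_sum₂_mul x d a, mul_right_comm, mul_div_assoc, div_self hxd, mul_one,
      Finset.sum_mul]
    exact Finset.sum_congr rfl fun i _ => by ring
  have k2' : d ^ a * (x ^ b - e ^ b) / (x - e)
      = ∑ i ∈ Finset.range b, x ^ i * (d ^ a * e ^ (b - 1 - i)) := by
    rw [← geom_sum₂_mul x e b, mul_comm (d ^ a), mul_right_comm, mul_div_assoc,
      div_self hxe, mul_one, Finset.sum_mul]
    exact Finset.sum_congr rfl fun i _ => by ring
  have k2 : d ^ a * (x ^ b - e ^ b) / (e - x)
      = -∑ i ∈ Finset.range b, x ^ i * (d ^ a * e ^ (b - 1 - i)) := by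
    rw [show e - x = -(x - e) by ring, div_neg, k2']
  rw [k1, k2, ← sub_eq_add_neg, sub_div, Finset.sum_div, Finset.sum_div]
  unfold W
  rw [← hd_def, ← he_def]
  congr 1 <;> exact Finset.sum_congr rfl fun i _ => by rw [mul_div_assoc]

lemma lsum_sub {α : Type*} (f g : α → ℝ) : ∀ (P : List α),
    (P.map (fun a => f a - g a)).sum = (P.map f).sum - (P.map g).sum
  | [] => by simp
  | a :: P => by simp [lsum_sub f g P]; ring

lemma lsum_finsum {α β : Type*} (s : Finset β) (f : α → β → ℝ) : ∀ (P : List α),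
    (P.map (fun a => ∑ b ∈ s, f a b)).sum = ∑ b ∈ s, (P.map (fun a => f a b)).sum
  | [] => by simp
  | a :: P => by
      simp only [List.map_cons, List.sum_cons, lsum_finsum s f P]
      rw [← Finset.sum_add_distrib]

lemma lsum_mul_left {α : Type*} (c : ℝ) (f : α → ℝ) : ∀ (P : List α),
    (P.map (fun a => c * f a)).sum = c * (P.map f).sum
  | [] => by simp
  | a :: P => by simp [lsum_mul_left c f P]; ring

lemma sum_map_flatMap {α β : Type*} (F : α → ℝ) (f : β → List α) : ∀ (P : List β),
    (((P.flatMap f).map F)).sum = (P.map (fun b => ((f b).map F).sum)).sum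
  | [] => by simp
  | a :: P => by simp [List.flatMap_cons, sum_map_flatMap F f P]

lemma main_lemma : ∀ (M : List ℝ), M.Nodup → ∀ a b : ℕ, a + b + 1 ≤ M.length →
    (M.permutations'.map (W (fun y => y ^ a) (fun y => y ^ b))).sum
      = if a + b + 1 = M.length then (-1 : ℝ) ^ b * ((M.length - 1).choose b : ℝ) else 0 := by
  intro M
  induction M with
  | nil => intro _ a b hab; simp at hab
  | cons x M ih =>
    intro hnd a b hab
    cases M with
    | nil =>
      have ha : a = 0 := by simp at hab; omega
      have hb : b = 0 := by simp at hab; omega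
      subst ha; subst hb
      show (([[x]]).map (W _ _)).sum = _
      simp [W]
    | cons z ys =>
      have hxM : x ∉ (z :: ys) := (List.nodup_cons.1 hnd).1
      have hM : (z :: ys).Nodup := (List.nodup_cons.1 hnd).2
      obtain ⟨m, hm_def⟩ : ∃ m, (z :: ys).length = m := ⟨_, rfl⟩
      rw [hm_def] at ih
      have hm1 : 1 ≤ m := by rw [← hm_def]; simp
      have habm : a + b ≤ m := by
        rw [List.length_cons, hm_def] at hab
        omega
      rw [show (x :: z :: ys).length = m + 1 from by rw [List.length_cons, hm_def]]
      have hunfold : (x :: z :: ys).permutations'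
          = ((z :: ys).permutations').flatMap (List.permutations'Aux x) := rfl
      rw [hunfold, sum_map_flatMap]
      have hstep : ∀ M' ∈ (z :: ys).permutations',
          ((M'.permutations'Aux x).map (W (fun y => y ^ a) (fun y => y ^ b))).sum
          = (∑ i ∈ Finset.range a,
              x ^ i * W (fun y => y ^ (a - 1 - i)) (fun y => y ^ b) M')
            - ∑ i ∈ Finset.range b,
              x ^ i * W (fun y => y ^ a) (fun y => y ^ (b - 1 - i)) M' := by
        intro M' hM'
        have hperm : List.Perm M' (z :: ys) := List.mem_permutations'.1 hM'
        have hne : M' ≠ [] := by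
          intro hh
          have := hperm.length_eq
          rw [hh] at this
          simp at this
        have hndM' : M'.Nodup := (hperm.nodup_iff).2 hM
        have hxM' : x ∉ M' := fun hh => hxM (hperm.mem_iff.1 hh)
        exact pAux_sum_eq a b x M' hne (List.nodup_cons.2 ⟨hxM', hndM'⟩)
      rw [List.map_congr_left hstep, lsum_sub, lsum_finsum, lsum_finsum]
      have hrw1 : ∀ i ∈ Finset.range a,
          (((z :: ys).permutations').map
            (fun M' => x ^ i * W (fun y => y ^ (a - 1 - i)) (fun y => y ^ b) M')).sum
          = if i = 0 then (if a + b = m then (-1 : ℝ) ^ b * ((m - 1).choose b : ℝ) else 0)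
            else 0 := by
        intro i hi
        have hi' : i < a := Finset.mem_range.1 hi
        rw [lsum_mul_left, ih hM (a - 1 - i) b (by omega)]
        by_cases h0 : i = 0
        · subst h0
          rw [show a - 1 - 0 + b + 1 = a + b from by omega]
          by_cases hc : a + b = m
          · simp [hc]
          · simp [hc]
        · have hcond : ¬(a - 1 - i + b + 1 = m) := by omega
          simp [h0, hcond]
      have hrw2 : ∀ i ∈ Finset.range b,
          (((z :: ys).permutations').map
            (fun M' => x ^ i * W (fun y => y ^ a) (fun y => y ^ (b - 1 - i)) M')).sum
          = if i = 0 then (if a + b = m then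
              (-1 : ℝ) ^ (b - 1) * ((m - 1).choose (b - 1) : ℝ) else 0)
            else 0 := by
        intro i hi
        have hi' : i < b := Finset.mem_range.1 hi
        rw [lsum_mul_left, ih hM a (b - 1 - i) (by omega)]
        by_cases h0 : i = 0
        · subst h0
          rw [show b - 1 - 0 = b - 1 from rfl,
            show a + (b - 1) + 1 = a + b from by omega]
          by_cases hc : a + b = m
          · simp [hc]
          · simp [hc]
        · have hcond : ¬(a + (b - 1 - i) + 1 = m) := by omega
          simp [h0, hcond]
      rw [Finset.sum_congr rfl hrw1, Finset.sum_congr rfl hrw2,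
        Finset.sum_ite_eq' (Finset.range a) 0, Finset.sum_ite_eq' (Finset.range b) 0]
      simp only [Finset.mem_range, Nat.add_sub_cancel]
      by_cases hc : a + b = m
      · have hcond : a + b + 1 = m + 1 := by omega
        simp only [hc, if_true, hcond]
        rcases Nat.eq_zero_or_pos b with hb | hb
        · subst hb
          have ha : 0 < a := by omega
          simp [ha, Nat.choose_zero_right]
        · obtain ⟨b', rfl⟩ : ∃ b', b = b' + 1 := ⟨b - 1, by omega⟩
          obtain ⟨m', rfl⟩ : ∃ m', m = m' + 1 := ⟨m - 1, by omega⟩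
          simp only [Nat.add_sub_cancel, hb, if_true]
          rcases Nat.eq_zero_or_pos a with ha | ha
          · subst ha
            have hbm : b' + 1 = m' + 1 := by omega
            have hb'm : b' = m' := by omega
            subst hb'm
            simp [Nat.choose_self, pow_succ]
          · simp only [ha, if_true]
            have hpascal : (m' + 1).choose (b' + 1) = m'.choose b' + m'.choose (b' + 1) :=
              Nat.choose_succ_succ m' (b' + 1 - 1)
            push_cast [hpascal]
            ring
      · have hcond : ¬(a + b + 1 = m + 1) := by omega
        simp [hc, hcond]

lemma headI_ofFn {n : ℕ} (f : Fin (n + 1) → ℝ) : (List.ofFn f).headI = f 0 := by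
  rw [List.ofFn_succ]; rfl

lemma getLastD_ofFn : ∀ (n : ℕ) (f : Fin (n + 1) → ℝ) (d : ℝ),
    (List.ofFn f).getLastD d = f (Fin.last n)
  | 0, f, d => by simp [List.ofFn_succ]
  | n + 1, f, d => by
      rw [List.ofFn_succ, List.getLastD_cons,
        getLastD_ofFn n (fun i => f i.succ) (f 0)]
      simp [Fin.succ_last]

lemma den_ofFn : ∀ (n : ℕ) (f : Fin (n + 1) → ℝ),
    den (List.ofFn f) = ∏ k : Fin n, (f k.castSucc - f k.succ)
  | 0, f => by simp [List.ofFn_succ]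
  | n + 1, f => by
      rw [List.ofFn_succ, den_cons _ (by simp), headI_ofFn (fun i => f i.succ),
        den_ofFn n (fun i => f i.succ), Fin.prod_univ_succ]
      simp

lemma perm_sum {m : ℕ} (l : Fin (m + 1) → ℝ) (hl : Function.Injective l)
    (F : List ℝ → ℝ) :
    ∑ σ : Equiv.Perm (Fin (m + 1)), F (List.ofFn (l ∘ σ))
      = (((List.ofFn l).permutations').map F).sum := by
  classical
  have hnodL : (List.ofFn l).Nodup := List.nodup_ofFn.2 hl
  have hnodP : ((List.ofFn l).permutations').Nodup := by
    have h1 := List.nodup_permutations _ hnodL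
    exact ((List.permutations_perm_permutations' _).nodup_iff).1 h1
  rw [← List.sum_toFinset _ hnodP]
  refine Finset.sum_bij (fun σ _ => List.ofFn (l ∘ σ)) ?_ ?_ ?_ ?_
  · intro σ _
    rw [List.mem_toFinset, List.mem_permutations']
    exact Equiv.Perm.ofFn_comp_perm σ l
  · intro σ _ τ _ hh
    have h2 : l ∘ σ = l ∘ τ := List.ofFn_injective hh
    apply Equiv.ext
    intro k
    exact hl (congrFun h2 k)
  · intro b hb
    rw [List.mem_toFinset, List.mem_permutations'] at hb
    have hlen : b.length = m + 1 := by
      rw [hb.length_eq, List.length_ofFn]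
    have hbnd : b.Nodup := (hb.nodup_iff).2 hnodL
    set q : Fin (m + 1) → ℝ := fun k => b.get (Fin.cast hlen.symm k) with hq
    have hqinj : Function.Injective q := by
      intro k k' hkk
      have := List.nodup_iff_injective_get.1 hbnd hkk
      simpa [Fin.ext_iff] using this
    have hspec : ∀ k, ∃ i, l i = q k := by
      intro k
      have : q k ∈ b := b.get_mem _
      rw [hb.mem_iff] at this
      rw [List.mem_ofFn] at this
      exact this
    set σ0 : Fin (m + 1) → Fin (m + 1) := fun k => Function.invFun l (q k) with hσ0
    have hlσ0 : ∀ k, l (σ0 k) = q k := fun k => Function.invFun_eq (hspec k)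
    have hσ0inj : Function.Injective σ0 := by
      intro k k' hkk
      apply hqinj
      rw [← hlσ0 k, ← hlσ0 k', hkk]
    refine ⟨Equiv.ofBijective σ0 (Finite.injective_iff_bijective.1 hσ0inj),
      Finset.mem_univ _, ?_⟩
    show List.ofFn (l ∘ σ0) = b
    have : l ∘ σ0 = q := funext hlσ0
    rw [this]
    apply List.ext_getElem (by simp [hlen])
    intro i h1 h2
    rw [List.getElem_ofFn]
    simp [hq]
  · intro σ _
    rfl

theorem stmt18 (n : ℕ) (t : ℝ) (l : Fin (n+1) → ℝ) (hl : Function.Injective l) :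
    ∑ σ : Equiv.Perm (Fin (n+1)), ∏ k : Fin n,
      (l (σ 0) - t * l (σ (Fin.last n))) / (l (σ k.castSucc) - l (σ k.succ))
    = ∑ k ∈ Finset.range (n+1), (n.choose k : ℝ)^2 * t^k := by
  classical
  have step1 : ∀ σ : Equiv.Perm (Fin (n+1)),
      (∏ k : Fin n, (l (σ 0) - t * l (σ (Fin.last n))) / (l (σ k.castSucc) - l (σ k.succ)))
      = ∑ j ∈ Finset.range (n+1), ((-1:ℝ)^(j+n) * (n.choose j : ℝ) * t^(n-j)) *
          W (fun y => y ^ j) (fun y => y ^ (n-j)) (List.ofFn (l ∘ σ)) := by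
    intro σ
    rw [Finset.prod_div_distrib, Finset.prod_const, Finset.card_univ, Fintype.card_fin]
    have hden : (∏ k : Fin n, (l (σ k.castSucc) - l (σ k.succ)))
        = den (List.ofFn (l ∘ σ)) := by
      rw [den_ofFn n (l ∘ σ)]
      rfl
    rw [hden, sub_pow (l (σ 0)) (t * l (σ (Fin.last n))) n, Finset.sum_div]
    refine Finset.sum_congr rfl fun j hj => ?_
    unfold W
    rw [headI_ofFn (l ∘ σ), getLastD_ofFn n (l ∘ σ)]
    simp only [Function.comp_apply]
    rw [mul_pow, ← mul_div_assoc]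
    congr 1
    ring
  rw [Finset.sum_congr rfl fun σ _ => step1 σ, Finset.sum_comm]
  have step2 : ∀ j ∈ Finset.range (n+1),
      (∑ σ : Equiv.Perm (Fin (n+1)), ((-1:ℝ)^(j+n) * (n.choose j : ℝ) * t^(n-j)) *
          W (fun y => y ^ j) (fun y => y ^ (n-j)) (List.ofFn (l ∘ σ)))
      = ((n.choose j : ℝ))^2 * t^(n-j) := by
    intro j hj
    have hj' : j ≤ n := by
      have := Finset.mem_range.1 hj
      omega
    rw [← Finset.mul_sum, perm_sum l hl,
      main_lemma (List.ofFn l) (List.nodup_ofFn.2 hl) j (n - j)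
        (by simp only [List.length_ofFn]; omega)]
    have hcond : j + (n - j) + 1 = (List.ofFn l).length := by
      simp only [List.length_ofFn]; omega
    rw [if_pos hcond]
    simp only [List.length_ofFn, Nat.add_sub_cancel]
    rw [Nat.choose_symm hj']
    have hsgn : (-1:ℝ)^(j+n) * (-1:ℝ)^(n-j) = 1 := by
      rw [← pow_add, show j + n + (n - j) = 2 * n from by omega, pow_mul]
      norm_num
    calc (-1:ℝ)^(j+n) * (n.choose j : ℝ) * t^(n-j) * ((-1:ℝ)^(n-j) * (n.choose j : ℝ))
        = ((-1:ℝ)^(j+n) * (-1:ℝ)^(n-j)) * ((n.choose j : ℝ) * (n.choose j : ℝ) * t^(n-j)) := by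
          ring
      _ = ((n.choose j : ℝ))^2 * t^(n-j) := by rw [hsgn]; ring
  rw [Finset.sum_congr rfl step2]
  conv_rhs => rw [← Finset.sum_range_reflect (fun k => (n.choose k : ℝ)^2 * t^k) (n+1)]
  refine Finset.sum_congr rfl fun j hj => ?_
  have hj' : j ≤ n := by
    have := Finset.mem_range.1 hj
    omega
  rw [show n + 1 - 1 - j = n - j from by omega, Nat.choose_symm hj']
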